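/- Setup: let r ≥ 9 and s ≥ 1 be integers, let G be a finite simple graph on rs vertices satisfying the semi-planar bipartite edge bound, let x be a vertex of G, and let V_1, …, V_r be an almost equitable coloring of G − x with small class V_1, auxiliary digraph H, accessible classes A and non-accessible classes B. If |A| ≤ 2, then the subdigraph of H induced on B has a strong component containing at least r − 2 classes, i.e., there is a set S of at least r − 2 non-accessible classes such that any two classes of S are mutually reachable by directed paths of H passing only through classes of B. (This is Claim 3.2 of the paper.) -/

import Mathlib

open scoped Classical

namespace Equitable

variable {V : Type*}

/-- An equitable `r`-coloring of `G`: a proper coloring with `r` colors whose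
color classes pairwise differ in size by at most `1`. -/
def IsEquitableColoring [Fintype V] (G : SimpleGraph V) (r : ℕ) (c : V → Fin r) : Prop :=
  (∀ u v : V, G.Adj u v → c u ≠ c v) ∧
  ∀ i j : Fin r,
    (Finset.univ.filter fun v => c v = i).card ≤
      (Finset.univ.filter fun v => c v = j).card + 1

/-- The number of edges of `G` with both endpoints in `S`. -/
noncomputable def edgesWithin [Fintype V] (G : SimpleGraph V) (S : Finset V) : ℕ :=
  (G.edgeFinset.filter fun e => ∀ v ∈ e, v ∈ S).card

/-- The number of edges of `G` with one endpoint in `X` and the other in `Y`. -/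
noncomputable def edgesBetween [Fintype V] (G : SimpleGraph V) (X Y : Finset V) : ℕ :=
  (G.edgeFinset.filter fun e => ∃ u ∈ X, ∃ w ∈ Y, e = s(u, w)).card

/-- The semi-planar edge bounds. -/
def SemiPlanarBounds [Fintype V] (G : SimpleGraph V) : Prop :=
  (∀ S : Finset V, edgesWithin G S ≤ 3 * S.card) ∧
  ∀ X Y : Finset V, Disjoint X Y → edgesBetween G X Y ≤ 2 * (X.card + Y.card)

/-- The planar edge bounds. -/
def PlanarBounds [Fintype V] (G : SimpleGraph V) : Prop :=
  (∀ S : Finset V, 3 ≤ S.card → edgesWithin G S ≤ 3 * S.card - 6) ∧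
  ∀ X Y : Finset V, Disjoint X Y → 3 ≤ X.card + Y.card →
    edgesBetween G X Y ≤ 2 * (X.card + Y.card) - 4

/-- The semi-planar bipartite edge bound. -/
def SemiPlanarBipBound [Fintype V] (G : SimpleGraph V) : Prop :=
  ∀ X Y : Finset V, Disjoint X Y → edgesBetween G X Y ≤ 2 * (X.card + Y.card)

/-- The planar bipartite edge bound. -/
def PlanarBipBound [Fintype V] (G : SimpleGraph V) : Prop :=
  ∀ X Y : Finset V, Disjoint X Y → 3 ≤ X.card + Y.card →
    edgesBetween G X Y ≤ 2 * (X.card + Y.card) - 4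

/-- `P` is an almost equitable coloring of `G − x`: a partition of `V(G) \ {x}` into `r`
independent sets, the small class `P 0` of size `s − 1` and the other classes of size `s`. -/
def AEColoring [Fintype V] (G : SimpleGraph V) (x : V) {r : ℕ} [NeZero r] (s : ℕ)
    (P : Fin r → Finset V) : Prop :=
  (∀ i j : Fin r, i ≠ j → Disjoint (P i) (P j)) ∧
  (∀ v : V, (∃ i, v ∈ P i) ↔ v ≠ x) ∧
  (∀ i : Fin r, ∀ u ∈ P i, ∀ w ∈ P i, ¬ G.Adj u w) ∧
  (P 0).card = s - 1 ∧
  ∀ i : Fin r, i ≠ 0 → (P i).card = s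

/-- The arc relation of the auxiliary digraph `H`: an arc from class `i` to class `j`
iff `i ≠ j` and some vertex of `P i` has no `G`-neighbor in `P j` (such a vertex
is a witness of the arc and is called movable to `P j`). -/
def Arc (G : SimpleGraph V) {r : ℕ} (P : Fin r → Finset V) (i j : Fin r) : Prop :=
  i ≠ j ∧ ∃ v ∈ P i, ∀ u ∈ P j, ¬ G.Adj v u

/-- A class is accessible if the auxiliary digraph has a directed path (possibly of
length `0`) from it to the small class `P 0`. -/
def Accessible (G : SimpleGraph V) {r : ℕ} [NeZero r] (P : Fin r → Finset V)
    (i : Fin r) : Prop :=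
  Relation.ReflTransGen (Arc G P) i 0

/-- The number of accessible classes. -/
noncomputable def accCount (G : SimpleGraph V) {r : ℕ} [NeZero r]
    (P : Fin r → Finset V) : ℕ :=
  (Finset.univ.filter fun i => Accessible G P i).card

/-- No almost equitable coloring of `G − x` has more accessible classes than `P`. -/
def MaxAccessible [Fintype V] (G : SimpleGraph V) (x : V) {r : ℕ} [NeZero r] (s : ℕ)
    (P : Fin r → Finset V) : Prop :=
  ∀ P' : Fin r → Finset V, AEColoring G x s P' → accCount G P' ≤ accCount G P

/-- Class `i` blocks class `j` if `i ≠ j` and the auxiliary digraph minus the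
class `i` has no directed path from `j` to the small class `P 0`. -/
def Blocks (G : SimpleGraph V) {r : ℕ} [NeZero r] (P : Fin r → Finset V)
    (i j : Fin r) : Prop :=
  i ≠ j ∧ ¬ Relation.ReflTransGen (fun p q => Arc G P p q ∧ p ≠ i ∧ q ≠ i) j 0

/-- An accessible class is terminal if it blocks no accessible class. -/
def Terminal (G : SimpleGraph V) {r : ℕ} [NeZero r] (P : Fin r → Finset V)
    (i : Fin r) : Prop :=
  Accessible G P i ∧ ∀ j : Fin r, Accessible G P j → ¬ Blocks G P i j

/-- `u` is a solo neighbor of `v` (where `v` lies in the accessible class `P i`):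
`u` lies in a non-accessible class, is adjacent to `v`, and `v` is the unique
neighbor of `u` in `P i`.  `Q(v)` is the set of such `u`. -/
def SoloNbr (G : SimpleGraph V) {r : ℕ} [NeZero r] (P : Fin r → Finset V)
    (i : Fin r) (v u : V) : Prop :=
  (∃ k : Fin r, ¬ Accessible G P k ∧ u ∈ P k) ∧ G.Adj v u ∧
    ∀ w ∈ P i, G.Adj u w → w = v

/-- `u ∈ Q'(v)`: `u` is a solo neighbor of `v` that is non-adjacent to some other
solo neighbor of `v`. -/
def InQ' (G : SimpleGraph V) {r : ℕ} [NeZero r] (P : Fin r → Finset V)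
    (i : Fin r) (v u : V) : Prop :=
  SoloNbr G P i v u ∧ ∃ u' : V, SoloNbr G P i v u' ∧ u' ≠ u ∧ ¬ G.Adj u u'

/-- A vertex `v` of a terminal accessible class `P i` is ordinary if some other vertex of
`P i` is movable to another accessible class, or there are at most two accessible classes. -/
def Ordinary (G : SimpleGraph V) {r : ℕ} [NeZero r] (P : Fin r → Finset V)
    (i : Fin r) (v : V) : Prop :=
  (∃ v' ∈ P i, v' ≠ v ∧
    ∃ j : Fin r, j ≠ i ∧ Accessible G P j ∧ ∀ w ∈ P j, ¬ G.Adj v' w) ∨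
  accCount G P ≤ 2

/-- The strong component of the auxiliary digraph containing class `i`. -/
noncomputable def strongComp (G : SimpleGraph V) {r : ℕ} (P : Fin r → Finset V)
    (i : Fin r) : Finset (Fin r) :=
  Finset.univ.filter fun j =>
    Relation.ReflTransGen (Arc G P) i j ∧ Relation.ReflTransGen (Arc G P) j i



section Claim32

variable [Fintype V] {G : SimpleGraph V} {x : V} {r s : ℕ} [NeZero r]
  {P : Fin r → Finset V}

private lemma pred_symm (A B : Finset V) :
    (G.edgeFinset.filter fun e => ∃ u ∈ A, ∃ w ∈ B, e = s(u, w)) =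
      G.edgeFinset.filter fun e => ∃ u ∈ B, ∃ w ∈ A, e = s(u, w) := by
  apply Finset.filter_congr
  intro e _
  constructor
  · rintro ⟨u, hu, w, hw, rfl⟩; exact ⟨w, hw, u, hu, Sym2.eq_swap⟩
  · rintro ⟨u, hu, w, hw, rfl⟩; exact ⟨w, hw, u, hu, Sym2.eq_swap⟩

private lemma card_le_edges {A B : Finset V} (hdisj : Disjoint A B)
    (h : ∀ v ∈ A, ∃ u ∈ B, G.Adj v u) :
    A.card ≤ (G.edgeFinset.filter fun e => ∃ u ∈ A, ∃ w ∈ B, e = s(u, w)).card := by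
  have h' : ∀ v : V, ∃ u : V, v ∈ A → u ∈ B ∧ G.Adj v u := by
    intro v
    by_cases hv : v ∈ A
    · obtain ⟨u, hu, hadj⟩ := h v hv
      exact ⟨u, fun _ => ⟨hu, hadj⟩⟩
    · exact ⟨v, fun hv' => absurd hv' hv⟩
  choose f hf using h'
  apply Finset.card_le_card_of_injOn (fun v => s(v, f v))
  · intro v hv
    rw [Finset.mem_coe, Finset.mem_filter]
    refine ⟨?_, v, hv, f v, (hf v hv).1, rfl⟩
    rw [SimpleGraph.mem_edgeFinset, SimpleGraph.mem_edgeSet]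
    exact (hf v hv).2
  · intro v hv v' hv' he
    rw [Sym2.eq_iff] at he
    rcases he with ⟨h1, _⟩ | ⟨h1, _⟩
    · exact h1
    · exfalso
      have hvB : v ∈ B := by rw [h1]; exact (hf v' hv').1
      exact Finset.disjoint_left.mp hdisj (Finset.mem_coe.mp hv) hvB

private lemma key_counting (hbip : SemiPlanarBipBound G) (hP : AEColoring G x s P)
    (hr : 9 ≤ r) (hs : 1 ≤ s) (X : Finset (Fin r)) (h0 : (0 : Fin r) ∉ X)
    (h3 : 3 ≤ X.card) (hXr : X.card + 3 ≤ r)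
    (hpair : ∀ p ∈ X, ∀ q ∉ X,
      (∀ v ∈ P p, ∃ u ∈ P q, G.Adj v u) ∨
        (q ≠ (0 : Fin r) ∧ ∀ v ∈ P q, ∃ u ∈ P p, G.Adj v u)) : False := by
  obtain ⟨hPdis, -, -, hc0, hcs⟩ := hP
  set XV := X.biUnion P with hXV
  set YV := Xᶜ.biUnion P with hYV
  have hdisjXY : Disjoint XV YV := by
    rw [Finset.disjoint_left]
    intro v hv hv'
    obtain ⟨p, hp, hvp⟩ := Finset.mem_biUnion.mp hv
    obtain ⟨q, hq, hvq⟩ := Finset.mem_biUnion.mp hv'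
    have hpq : p ≠ q := fun h => (Finset.mem_compl.mp hq) (h ▸ hp)
    exact Finset.disjoint_left.mp (hPdis p q hpq) hvp hvq
  set F : Fin r × Fin r → Finset (Sym2 V) :=
    fun a => G.edgeFinset.filter fun e => ∃ u ∈ P a.1, ∃ w ∈ P a.2, e = s(u, w) with hF
  have keyeq : ∀ y z : Fin r, ∀ v : V, v ∈ P y → v ∈ P z → y = z := by
    intro y z v hy hz
    by_contra hne
    exact Finset.disjoint_left.mp (hPdis y z hne) hy hz
  have hFdisj : ∀ a ∈ X ×ˢ Xᶜ, ∀ b ∈ X ×ˢ Xᶜ, a ≠ b → Disjoint (F a) (F b) := by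
    rintro ⟨p, q⟩ ha ⟨p', q'⟩ hb hab
    obtain ⟨hpX, hqX⟩ := Finset.mem_product.mp ha
    obtain ⟨hpX', hqX'⟩ := Finset.mem_product.mp hb
    rw [Finset.disjoint_left]
    intro e he he'
    rw [hF, Finset.mem_filter] at he he'
    obtain ⟨-, u, hu, w, hw, rfl⟩ := he
    obtain ⟨-, u', hu', w', hw', heq⟩ := he'
    rw [Sym2.eq_iff] at heq
    rcases heq with ⟨h1, h2⟩ | ⟨h1, h2⟩
    · apply hab
      have e1 : p = p' := keyeq _ _ u hu (by rw [h1]; exact hu')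
      have e2 : q = q' := keyeq _ _ w hw (by rw [h2]; exact hw')
      rw [e1, e2]
    · have e1 : p = q' := keyeq _ _ u hu (by rw [h1]; exact hw')
      exact (Finset.mem_compl.mp hqX') (e1 ▸ hpX)
  have hFcard : ∀ a ∈ X ×ˢ Xᶜ, s ≤ (F a).card := by
    rintro ⟨p, q⟩ ha
    obtain ⟨hpX, hqX⟩ := Finset.mem_product.mp ha
    have hqX' : q ∉ X := Finset.mem_compl.mp hqX
    have hpq : p ≠ q := fun h => hqX' (h ▸ hpX)
    have hp0 : p ≠ 0 := fun h => h0 (h ▸ hpX)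
    rcases hpair p hpX q hqX' with h | ⟨hq0, h⟩
    · have := card_le_edges (hPdis p q hpq) h
      rwa [hcs p hp0] at this
    · have := card_le_edges (hPdis q p hpq.symm) h
      rw [hcs q hq0, pred_symm (P q) (P p)] at this
      exact this
  have hsum : X.card * Xᶜ.card * s ≤ edgesBetween G XV YV := by
    have h1 : ∑ _a ∈ X ×ˢ Xᶜ, s ≤ ∑ a ∈ X ×ˢ Xᶜ, (F a).card := Finset.sum_le_sum hFcard
    rw [Finset.sum_const, smul_eq_mul, Finset.card_product] at h1
    have h2 : ∑ a ∈ X ×ˢ Xᶜ, (F a).card = ((X ×ˢ Xᶜ).biUnion F).card :=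
      (Finset.card_biUnion hFdisj).symm
    have h4 : (X ×ˢ Xᶜ).biUnion F ⊆
        G.edgeFinset.filter fun e => ∃ u ∈ XV, ∃ w ∈ YV, e = s(u, w) := by
      intro e he
      obtain ⟨⟨p, q⟩, hpq, he⟩ := Finset.mem_biUnion.mp he
      obtain ⟨hpX, hqX⟩ := Finset.mem_product.mp hpq
      rw [hF, Finset.mem_filter] at he
      obtain ⟨hee, u, hu, w, hw, rfl⟩ := he
      rw [Finset.mem_filter]
      exact ⟨hee, u, Finset.mem_biUnion.mpr ⟨p, hpX, hu⟩, w,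
        Finset.mem_biUnion.mpr ⟨q, hqX, hw⟩, rfl⟩
    calc X.card * Xᶜ.card * s ≤ ∑ a ∈ X ×ˢ Xᶜ, (F a).card := h1
      _ = ((X ×ˢ Xᶜ).biUnion F).card := h2
      _ ≤ _ := Finset.card_le_card h4
  have hXVcard : XV.card = X.card * s := by
    rw [hXV, Finset.card_biUnion (fun p _ q _ hne => hPdis p q hne)]
    rw [Finset.sum_congr rfl (fun p hp => hcs p (fun h => h0 (h ▸ hp)))]
    rw [Finset.sum_const, smul_eq_mul]
  have h0c : (0 : Fin r) ∈ Xᶜ := Finset.mem_compl.mpr h0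
  have hYVcard : YV.card = (s - 1) + (Xᶜ.card - 1) * s := by
    rw [hYV, Finset.card_biUnion (fun p _ q _ hne => hPdis p q hne)]
    rw [← Finset.add_sum_erase _ _ h0c, hc0]
    congr 1
    rw [Finset.sum_congr rfl (fun q hq => hcs q (Finset.mem_erase.mp hq).1),
      Finset.sum_const, smul_eq_mul, Finset.card_erase_of_mem h0c]
  have hb := hbip XV YV hdisjXY
  have hfinal := le_trans hsum hb
  rw [hXVcard, hYVcard] at hfinal
  have hcompl : Xᶜ.card = r - X.card := by
    rw [Finset.card_compl, Fintype.card_fin]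
  obtain ⟨s', rfl⟩ : ∃ s', s = s' + 1 := ⟨s - 1, by omega⟩
  obtain ⟨c', hc'⟩ : ∃ c', Xᶜ.card = c' + 3 := ⟨Xᶜ.card - 3, by omega⟩
  obtain ⟨m', hm'⟩ : ∃ m', X.card = m' + 3 := ⟨X.card - 3, by omega⟩
  have h9 : 3 ≤ m' + c' := by omega
  rw [hm', hc'] at hfinal
  have e1 : s' + 1 - 1 = s' := by omega
  have e2 : c' + 3 - 1 = c' + 2 := by omega
  rw [e1, e2] at hfinal
  nlinarith [hfinal, h9, Nat.zero_le (m' * c'), Nat.zero_le s',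
    Nat.zero_le (m' * c' * s'), Nat.zero_le (m' * s'), Nat.zero_le (c' * s')]

/-- The strong component of `i` in the subdigraph induced on non-accessible classes. -/
private noncomputable def compB (G : SimpleGraph V) {r : ℕ} [NeZero r]
    (P : Fin r → Finset V) (i : Fin r) : Finset (Fin r) :=
  Finset.univ.filter fun j =>
    Relation.ReflTransGen
      (fun p q => Arc G P p q ∧ ¬ Accessible G P p ∧ ¬ Accessible G P q) i j ∧
    Relation.ReflTransGen
      (fun p q => Arc G P p q ∧ ¬ Accessible G P p ∧ ¬ Accessible G P q) j i

private lemma mem_compB_self (G : SimpleGraph V) (P : Fin r → Finset V) (i : Fin r) :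
    i ∈ compB G P i := by
  rw [compB, Finset.mem_filter]
  exact ⟨Finset.mem_univ _, Relation.ReflTransGen.refl, Relation.ReflTransGen.refl⟩

private lemma reach_not_acc {i j : Fin r}
    (h : Relation.ReflTransGen
      (fun p q => Arc G P p q ∧ ¬ Accessible G P p ∧ ¬ Accessible G P q) i j)
    (hi : ¬ Accessible G P i) : ¬ Accessible G P j := by
  rcases h.cases_tail with h' | ⟨c, -, hc⟩
  · rw [h']; exact hi
  · exact hc.2.2

private lemma zero_not_mem_compB {i : Fin r} (hi : ¬ Accessible G P i) :
    (0 : Fin r) ∉ compB G P i := by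
  intro h
  rw [compB, Finset.mem_filter] at h
  exact reach_not_acc h.2.1 hi Relation.ReflTransGen.refl

private lemma compB_pair {i : Fin r} (hi : ¬ Accessible G P i) {p : Fin r}
    (hp : p ∈ compB G P i) {q : Fin r} (hq : q ∉ compB G P i) :
    (∀ v ∈ P p, ∃ u ∈ P q, G.Adj v u) ∨
      (q ≠ (0 : Fin r) ∧ ∀ v ∈ P q, ∃ u ∈ P p, G.Adj v u) := by
  rw [compB, Finset.mem_filter] at hp
  obtain ⟨-, hip, hpi⟩ := hp
  have hpA : ¬ Accessible G P p := reach_not_acc hip hi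
  have hpq : p ≠ q := by
    rintro rfl
    exact hq (by rw [compB, Finset.mem_filter]; exact ⟨Finset.mem_univ _, hip, hpi⟩)
  have noarc_left : ¬ Arc G P p q → ∀ v ∈ P p, ∃ u ∈ P q, G.Adj v u := by
    intro hn v hv
    by_contra hcon
    push_neg at hcon
    exact hn ⟨hpq, v, hv, hcon⟩
  by_cases hqA : Accessible G P q
  · left
    apply noarc_left
    intro harc
    exact hpA (Relation.ReflTransGen.head harc hqA)
  · by_cases harc : Arc G P p q
    · by_cases harc' : Arc G P q p
      · exfalso
        apply hq
        rw [compB, Finset.mem_filter]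
        exact ⟨Finset.mem_univ _, hip.tail ⟨harc, hpA, hqA⟩,
          Relation.ReflTransGen.head ⟨harc', hqA, hpA⟩ hpi⟩
      · right
        refine ⟨?_, ?_⟩
        · rintro rfl
          exact hqA Relation.ReflTransGen.refl
        · intro v hv
          by_contra hcon
          push_neg at hcon
          exact harc' ⟨hpq.symm, v, hv, hcon⟩
    · left; exact noarc_left harc

end Claim32

/-- **Claim 3.2.** For `r ≥ 9` and a graph satisfying the semi-planar bipartite edge
bound: if an almost equitable coloring of `G − x` has at most two accessible classes,
then the subdigraph of the auxiliary digraph induced on the non-accessible classes has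
a strong component with at least `r − 2` classes. -/
theorem big_strong_component_semiPlanar (V : Type*) [Fintype V] (G : SimpleGraph V)
    (x : V) (r s : ℕ) [NeZero r] (hr : 9 ≤ r) (hs : 1 ≤ s)
    (hcard : Fintype.card V = r * s) (hbip : SemiPlanarBipBound G)
    (P : Fin r → Finset V) (hP : AEColoring G x s P)
    (hA : accCount G P ≤ 2) :
    ∃ S : Finset (Fin r), r - 2 ≤ S.card ∧ (∀ i ∈ S, ¬ Accessible G P i) ∧
      ∀ i ∈ S, ∀ j ∈ S,
        Relation.ReflTransGen
          (fun p q => Arc G P p q ∧ ¬ Accessible G P p ∧ ¬ Accessible G P q) i j := by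
  classical
  by_cases hbig : ∃ i, ¬ Accessible G P i ∧ r - 2 ≤ (compB G P i).card
  · obtain ⟨i, hi, hci⟩ := hbig
    refine ⟨compB G P i, hci, ?_, ?_⟩
    · intro j hj
      rw [compB, Finset.mem_filter] at hj
      exact reach_not_acc hj.2.1 hi
    · intro j hj k hk
      rw [compB, Finset.mem_filter] at hj hk
      exact hj.2.2.trans hk.2.1
  · exfalso
    push_neg at hbig
    have hsmall : ∀ i, ¬ Accessible G P i → (compB G P i).card ≤ 2 := by
      intro i hi
      by_contra hcon
      push_neg at hcon
      have hlt := hbig i hi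
      exact key_counting hbip hP hr hs (compB G P i) (zero_not_mem_compB hi)
        (by omega) (by omega) (fun p hp q hq => compB_pair hi hp hq)
    have hBcard : r - 2 ≤ (Finset.univ.filter fun i => ¬ Accessible G P i).card := by
      have h1 := Finset.card_filter_add_card_filter_not
        (s := (Finset.univ : Finset (Fin r))) (p := fun i => Accessible G P i)
      have h2 : accCount G P ≤ 2 := hA
      rw [accCount] at h2
      rw [Finset.card_univ, Fintype.card_fin] at h1
      omega
    obtain ⟨T, hTB, hT3⟩ := Finset.exists_subset_card_eq (n := 3) (le_trans (by omega) hBcard)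
    have hTne : ∀ t ∈ T, ¬ Accessible G P t := fun t ht =>
      (Finset.mem_filter.mp (hTB ht)).2
    set X := T.biUnion (compB G P) with hX
    have hsub : T ⊆ X := fun t ht =>
      Finset.mem_biUnion.mpr ⟨t, ht, mem_compB_self G P t⟩
    have h3 : 3 ≤ X.card := hT3 ▸ Finset.card_le_card hsub
    have h6 : X.card ≤ 6 := by
      calc X.card ≤ ∑ t ∈ T, (compB G P t).card := Finset.card_biUnion_le
        _ ≤ ∑ _t ∈ T, 2 := Finset.sum_le_sum (fun t ht => hsmall t (hTne t ht))
        _ = 6 := by rw [Finset.sum_const, hT3]; rfl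
    have h0 : (0 : Fin r) ∉ X := by
      intro h0
      obtain ⟨t, ht, h0t⟩ := Finset.mem_biUnion.mp h0
      exact zero_not_mem_compB (hTne t ht) h0t
    refine key_counting hbip hP hr hs X h0 h3 (by omega) ?_
    intro p hp q hq
    obtain ⟨t, ht, hpt⟩ := Finset.mem_biUnion.mp hp
    exact compB_pair (hTne t ht) hpt
      (fun hqc => hq (Finset.mem_biUnion.mpr ⟨t, ht, hqc⟩))


end Equitable
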